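/- (Polar equation of the hyperboloid, Eq. (13).) Let c, s ∈ ℝ³ with c ≠ 0 and s ≠ 0, and let e ∈ ℝ with |e| < ‖s‖₂. If ‖c − s‖₂ − ‖c‖₂ = e, then ‖c‖₂ = (‖s‖₂² − e²) / (2(‖s‖₂ cosΘ + e)), where cosΘ = ⟨c, s⟩/(‖c‖₂ ‖s‖₂) is the cosine of the angle between c and s; in particular ‖s‖₂ cosΘ + e > 0. -/

import Mathlib

/-- Polar equation of the hyperboloid (Eq. (13)).
Here `cos Θ = ⟪c, s⟫ / (‖c‖ ‖s‖)`. -/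
theorem hyperboloid_polar_equation (c s : EuclideanSpace ℝ (Fin 3)) (e : ℝ)
    (hc : c ≠ 0) (hs : s ≠ 0) (he : |e| < ‖s‖)
    (h : ‖c - s‖ - ‖c‖ = e) :
    0 < ‖s‖ * ((inner ℝ c s : ℝ) / (‖c‖ * ‖s‖)) + e ∧
    ‖c‖ = (‖s‖ ^ 2 - e ^ 2) / (2 * (‖s‖ * ((inner ℝ c s : ℝ) / (‖c‖ * ‖s‖)) + e)) := by
  have hr : 0 < ‖c‖ := norm_pos_iff.mpr hc
  have hσ : 0 < ‖s‖ := norm_pos_iff.mpr hs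
  have hcs : ‖c - s‖ = ‖c‖ + e := by linarith
  have hsq : ‖c - s‖ ^ 2 = ‖c‖ ^ 2 - 2 * (inner ℝ c s : ℝ) + ‖s‖ ^ 2 :=
    norm_sub_sq_real c s
  rw [hcs] at hsq
  have key : (inner ℝ c s : ℝ) + ‖c‖ * e = (‖s‖ ^ 2 - e ^ 2) / 2 := by nlinarith
  have hD : ‖s‖ * ((inner ℝ c s : ℝ) / (‖c‖ * ‖s‖)) + e
      = ((inner ℝ c s : ℝ) + ‖c‖ * e) / ‖c‖ := by
    field_simp
  have he2 : e ^ 2 < ‖s‖ ^ 2 := by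
    have := sq_abs e
    nlinarith [abs_nonneg e]
  have hDpos : 0 < ‖s‖ * ((inner ℝ c s : ℝ) / (‖c‖ * ‖s‖)) + e := by
    rw [hD, key]
    exact div_pos (by linarith) hr
  refine ⟨hDpos, ?_⟩
  rw [hD, key]
  rw [eq_div_iff (by rw [hD, key] at hDpos; positivity)]
  field_simp
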